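/- Lemma 8 (abstract form: the crossing ratio R expressed through θ). For a ∈ {1, …, m} let S_{P_a} = B(α^{P_a}, F_{P_a}) and for b ∈ {1, …, n} let S_{Q_b} = B(α^{Q_b}, F_{Q_b}) be string-type operators with |F_{P_a}(c)| = |F_{Q_b}(c)| = 1 for all c; set α^P := Σ_{a=1}^m α^{P_a} and α^Q := Σ_{b=1}^n α^{Q_b}. Suppose that for each a there is a finite list L_a of plaquettes with Σ_{p∈L_a} α_p = α^Q and F_{P_a}(x + α^Q) = θ_{α^{P_a}}(x, L_a) · F_{P_a}(x) for every configuration x, and for each b there is a finite list M_b of plaquettes with Σ_{q∈M_b} α_q = α^P and F_{Q_b}(x + α^P) = θ_{α^{Q_b}}(x, M_b) · F_{Q_b}(x) for every configuration x. Then for every configuration i, the ratio R(i) := ( ∏_{a=1}^m F_{P_a}(i + α^Q + Σ_{j<a} α^{P_j}) · ∏_{b=1}^n F_{Q_b}(i + Σ_{j'<b} α^{Q_{j'}}) ) / ( ∏_{a=1}^m F_{P_a}(i + Σ_{j<a} α^{P_j}) · ∏_{b=1}^n F_{Q_b}(i + α^P + Σ_{j'<b} α^{Q_{j'}}) ) equals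 ∏_{a=1}^m θ_{α^{P_a}}(i + Σ_{j<a} α^{P_j}, L_a) · ∏_{b=1}^n (θ_{α^{Q_b}}(i + Σ_{j'<b} α^{Q_{j'}}, M_b))⁻¹. -/

import Mathlib

/-- A plaquette: a flip pattern `α_p` together with a unit-modulus phase function `b_p`. -/
structure Plaquette (E : Type*) where
  flip : E → ZMod 2
  phase : (E → ZMod 2) → ℂ
  unit_phase : ∀ c, ‖phase c‖ = 1

/-- `theta δ i [p₁, …, p_m] = ∏_k b_{p_k}(i + δ + α_{p₁} + ⋯ + α_{p_{k-1}}) /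
    b_{p_k}(i + α_{p₁} + ⋯ + α_{p_{k-1}})` (Eq. (21) of the paper). -/
noncomputable def theta {E : Type*} (δ : E → ZMod 2) :
    (E → ZMod 2) → List (Plaquette E) → ℂ
  | _, [] => 1
  | i, p :: L => (p.phase (i + δ) / p.phase i) * theta δ (i + p.flip) L

/-- Lemma 8 (abstract form: the crossing ratio `R` expressed through θ). -/
theorem crossing_ratio_via_theta {E : Type*} [Fintype E] [DecidableEq E] {m n : ℕ}
    (Pα : Fin m → (E → ZMod 2)) (PF : Fin m → ((E → ZMod 2) → ℂ))
    (Qα : Fin n → (E → ZMod 2)) (QF : Fin n → ((E → ZMod 2) → ℂ))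
    (hPF : ∀ a c, ‖PF a c‖ = 1)
    (hQF : ∀ b c, ‖QF b c‖ = 1)
    (L : Fin m → List (Plaquette E)) (M : Fin n → List (Plaquette E))
    (hLsum : ∀ a, ((L a).map Plaquette.flip).sum = ∑ b : Fin n, Qα b)
    (hLrec : ∀ a, ∀ x : E → ZMod 2,
      PF a (x + ∑ b : Fin n, Qα b) = theta (Pα a) x (L a) * PF a x)
    (hMsum : ∀ b, ((M b).map Plaquette.flip).sum = ∑ a : Fin m, Pα a)
    (hMrec : ∀ b, ∀ x : E → ZMod 2,
      QF b (x + ∑ a : Fin m, Pα a) = theta (Qα b) x (M b) * QF b x)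
    (i : E → ZMod 2) :
    ((∏ a : Fin m, PF a (i + (∑ b : Fin n, Qα b) +
        ∑ j ∈ Finset.univ.filter (fun j => j < a), Pα j)) *
     (∏ b : Fin n, QF b (i + ∑ j' ∈ Finset.univ.filter (fun j' => j' < b), Qα j'))) /
    ((∏ a : Fin m, PF a (i + ∑ j ∈ Finset.univ.filter (fun j => j < a), Pα j)) *
     (∏ b : Fin n, QF b (i + (∑ a : Fin m, Pα a) +
        ∑ j' ∈ Finset.univ.filter (fun j' => j' < b), Qα j'))) =
    (∏ a : Fin m, theta (Pα a)
        (i + ∑ j ∈ Finset.univ.filter (fun j => j < a), Pα j) (L a)) *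
    (∏ b : Fin n, (theta (Qα b)
        (i + ∑ j' ∈ Finset.univ.filter (fun j' => j' < b), Qα j') (M b))⁻¹) := by

  have hPne : ∀ a x, PF a x ≠ 0 := fun a x h => by
    have := hPF a x; rw [h] at this; simp at this
  have hQne : ∀ b x, QF b x ≠ 0 := fun b x h => by
    have := hQF b x; rw [h] at this; simp at this
  have hP : ∀ a : Fin m,
      PF a (i + (∑ b : Fin n, Qα b) + ∑ j ∈ Finset.univ.filter (fun j => j < a), Pα j)
      = theta (Pα a) (i + ∑ j ∈ Finset.univ.filter (fun j => j < a), Pα j) (L a)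
        * PF a (i + ∑ j ∈ Finset.univ.filter (fun j => j < a), Pα j) := by
    intro a
    have h := hLrec a (i + ∑ j ∈ Finset.univ.filter (fun j => j < a), Pα j)
    rw [← h]
    congr 1
    abel
  have hQ : ∀ b : Fin n,
      QF b (i + (∑ a : Fin m, Pα a) + ∑ j' ∈ Finset.univ.filter (fun j' => j' < b), Qα j')
      = theta (Qα b) (i + ∑ j' ∈ Finset.univ.filter (fun j' => j' < b), Qα j') (M b)
        * QF b (i + ∑ j' ∈ Finset.univ.filter (fun j' => j' < b), Qα j') := by
    intro b
    have h := hMrec b (i + ∑ j' ∈ Finset.univ.filter (fun j' => j' < b), Qα j')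
    rw [← h]
    congr 1
    abel
  rw [Finset.prod_congr rfl (fun a _ => hP a), Finset.prod_congr rfl (fun b _ => hQ b),
    Finset.prod_mul_distrib, Finset.prod_mul_distrib]
  have hPprod : (∏ a : Fin m, PF a (i + ∑ j ∈ Finset.univ.filter (fun j => j < a), Pα j)) ≠ 0 :=
    Finset.prod_ne_zero_iff.2 fun a _ => hPne a _
  have hQprod : (∏ b : Fin n, QF b (i + ∑ j' ∈ Finset.univ.filter (fun j' => j' < b), Qα j')) ≠ 0 :=
    Finset.prod_ne_zero_iff.2 fun b _ => hQne b _
  have hth : (∏ b : Fin n, theta (Qα b)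
      (i + ∑ j' ∈ Finset.univ.filter (fun j' => j' < b), Qα j') (M b)) ≠ 0 := by
    refine Finset.prod_ne_zero_iff.2 fun b _ => ?_
    intro h
    have := hQ b
    rw [h, zero_mul] at this
    exact hQne b _ this
  rw [Finset.prod_inv_distrib]
  field_simp
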